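/- For any finite connected simple graphs G₁ and G₂, the worst-case swap routing time of the Cartesian (box) product satisfies rt_S(G₁ □ G₂) ≤ 2·rt_S(G₁) + rt_S(G₂). -/

import Mathlib

/-- A swap round on `G`: a permutation that is a product of transpositions along a
matching of `G`, i.e. an involution moving every non-fixed vertex to a neighbor. -/
def IsSwapRound {V : Type*} (G : SimpleGraph V) (σ : Equiv.Perm V) : Prop :=
  σ * σ = 1 ∧ ∀ v, σ v ≠ v → G.Adj v (σ v)

/-- The swap routing time of a permutation `π` on `G`: the least number of swap rounds
whose product is `π`. -/
noncomputable def rtS {V : Type*} (G : SimpleGraph V) (π : Equiv.Perm V) : ℕ :=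
  sInf {T : ℕ | ∃ L : List (Equiv.Perm V), L.length = T ∧
    (∀ σ ∈ L, IsSwapRound G σ) ∧ L.prod = π}

/-- The worst-case swap routing time of `G`. -/
noncomputable def rtSworst {V : Type*} (G : SimpleGraph V) : ℕ :=
  ⨆ π : Equiv.Perm V, rtS G π

section Aux

variable {V : Type*} {G : SimpleGraph V}

lemma isSwapRound_one (G : SimpleGraph V) : IsSwapRound G (1 : Equiv.Perm V) :=
  ⟨mul_one 1, fun _ hv => absurd rfl hv⟩

lemma isSwapRound_swap [DecidableEq V] {u v : V} (h : G.Adj u v) :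
    IsSwapRound G (Equiv.swap u v) := by
  refine ⟨Equiv.swap_mul_self u v, fun w hw => ?_⟩
  by_cases hu : w = u
  · subst hu; rw [Equiv.swap_apply_left]; exact h
  by_cases hv' : w = v
  · subst hv'; rw [Equiv.swap_apply_right]; exact h.symm
  · rw [Equiv.swap_apply_of_ne_of_ne hu hv'] at hw; exact absurd rfl hw

lemma swap_mem_closure [DecidableEq V] {x y : V} (p : G.Walk x y) (hxy : x ≠ y) :
    Equiv.swap x y ∈
      Subgroup.closure {σ : Equiv.Perm V | ∃ u v, G.Adj u v ∧ σ = Equiv.swap u v} := by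
  induction p with
  | nil => exact absurd rfl hxy
  | @cons x b y h q ih =>
    by_cases hby : b = y
    · subst hby; exact Subgroup.subset_closure ⟨_, _, h, rfl⟩
    · have hxb : x ≠ b := h.ne
      have hswap : Equiv.swap x y =
          Equiv.swap x b * Equiv.swap b y * (Equiv.swap x b)⁻¹ := by
        have := Equiv.swap_apply_apply (Equiv.swap x b) b y
        rw [Equiv.swap_apply_right, Equiv.swap_apply_of_ne_of_ne (Ne.symm hxy) (Ne.symm hby)] at this
        exact this
      rw [hswap]
      exact mul_mem (mul_mem (Subgroup.subset_closure ⟨x, b, h, rfl⟩) (ih hby))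
        (inv_mem (Subgroup.subset_closure ⟨x, b, h, rfl⟩))

lemma exists_swapRound_list [Finite V] (hG : G.Connected) (π : Equiv.Perm V) :
    ∃ L : List (Equiv.Perm V), (∀ σ ∈ L, IsSwapRound G σ) ∧ L.prod = π := by
  classical
  set S : Set (Equiv.Perm V) := {σ | ∃ u v, G.Adj u v ∧ σ = Equiv.swap u v} with hSdef
  have hcl : Subgroup.closure S = ⊤ := by
    rw [eq_top_iff, ← Equiv.Perm.closure_isSwap, Subgroup.closure_le]
    rintro σ ⟨x, y, hxy, rfl⟩
    obtain ⟨p⟩ := hG.preconnected x y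
    exact swap_mem_closure p hxy
  have hπ : π ∈ Subgroup.closure S := hcl ▸ Subgroup.mem_top π
  have hπ' : π ∈ Submonoid.closure (S ∪ S⁻¹) := by
    rw [← Subgroup.closure_toSubmonoid]; exact hπ
  obtain ⟨l, hl, hprod⟩ := Submonoid.exists_list_of_mem_closure hπ'
  refine ⟨l, fun σ hσ => ?_, hprod⟩
  rcases hl σ hσ with h | h
  · obtain ⟨u, v, huv, rfl⟩ := h; exact isSwapRound_swap huv
  · obtain ⟨u, v, huv, hσ'⟩ := Set.mem_inv.1 h
    have : σ = Equiv.swap u v := by rw [← inv_inv σ, hσ', Equiv.swap_inv]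
    exact this ▸ isSwapRound_swap huv

lemma rtS_le_of_list {π : Equiv.Perm V} {L : List (Equiv.Perm V)}
    (hL : ∀ σ ∈ L, IsSwapRound G σ) (hprod : L.prod = π) : rtS G π ≤ L.length :=
  Nat.sInf_le ⟨L, rfl, hL, hprod⟩

lemma exists_list_rtS [Finite V] (hG : G.Connected) (π : Equiv.Perm V) :
    ∃ L : List (Equiv.Perm V), L.length = rtS G π ∧
      (∀ σ ∈ L, IsSwapRound G σ) ∧ L.prod = π := by
  obtain ⟨L, h1, h2⟩ := exists_swapRound_list hG π
  exact Nat.sInf_mem (s := {T : ℕ | ∃ L : List (Equiv.Perm V), L.length = T ∧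
    (∀ σ ∈ L, IsSwapRound G σ) ∧ L.prod = π}) ⟨L.length, L, rfl, h1, h2⟩

lemma rtS_le_rtSworst [Finite V] (G : SimpleGraph V) (π : Equiv.Perm V) :
    rtS G π ≤ rtSworst G :=
  le_ciSup (Set.Finite.bddAbove (Set.finite_range _)) π

end Aux

section Fiber

variable {A B : Type*}

/-- Act by `e b` on the first coordinate of `(a, b)`. -/
def fiberL : (B → Equiv.Perm A) →* Equiv.Perm (A × B) where
  toFun e :=
    { toFun := fun x => (e x.2 x.1, x.2)
      invFun := fun x => ((e x.2)⁻¹ x.1, x.2)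
      left_inv := fun x => by simp
      right_inv := fun x => by simp }
  map_one' := Equiv.ext fun x => rfl
  map_mul' e f := Equiv.ext fun x => rfl

/-- Act by `e a` on the second coordinate of `(a, b)`. -/
def fiberR : (A → Equiv.Perm B) →* Equiv.Perm (A × B) where
  toFun e :=
    { toFun := fun x => (x.1, e x.1 x.2)
      invFun := fun x => (x.1, (e x.1)⁻¹ x.2)
      left_inv := fun x => by simp
      right_inv := fun x => by simp }
  map_one' := Equiv.ext fun x => rfl
  map_mul' e f := Equiv.ext fun x => rfl

@[simp] lemma fiberL_apply (e : B → Equiv.Perm A) (x : A × B) :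
    fiberL e x = (e x.2 x.1, x.2) := rfl

@[simp] lemma fiberR_apply (e : A → Equiv.Perm B) (x : A × B) :
    fiberR e x = (x.1, e x.1 x.2) := rfl

variable {G₁ : SimpleGraph A} {G₂ : SimpleGraph B}

lemma isSwapRound_fiberL (e : B → Equiv.Perm A) (he : ∀ b, IsSwapRound G₁ (e b)) :
    IsSwapRound (G₁ □ G₂) (fiberL e) := by
  constructor
  · rw [← map_mul]
    have : (fun b => e b * e b) = (1 : B → Equiv.Perm A) := funext fun b => (he b).1
    rw [show e * e = (1 : B → Equiv.Perm A) from this, map_one]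
  · rintro ⟨a, b⟩ hmove
    have hne : e b a ≠ a := by
      intro h; apply hmove; show (e b a, b) = (a, b); rw [h]
    exact SimpleGraph.boxProd_adj.2 (Or.inl ⟨(he b).2 a hne, rfl⟩)

lemma isSwapRound_fiberR (e : A → Equiv.Perm B) (he : ∀ a, IsSwapRound G₂ (e a)) :
    IsSwapRound (G₁ □ G₂) (fiberR e) := by
  constructor
  · rw [← map_mul]
    have : (fun a => e a * e a) = (1 : A → Equiv.Perm B) := funext fun a => (he a).1
    rw [show e * e = (1 : A → Equiv.Perm B) from this, map_one]
  · rintro ⟨a, b⟩ hmove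
    have hne : e a b ≠ b := by
      intro h; apply hmove; show (a, e a b) = (a, b); rw [h]
    exact SimpleGraph.boxProd_adj.2 (Or.inr ⟨(he a).2 b hne, rfl⟩)

lemma ofFn_get_cast {α : Type*} {r : ℕ} (l : List α) (h : l.length = r) :
    List.ofFn (fun i : Fin r => l.get (Fin.cast h.symm i)) = l := by
  subst h; exact List.ofFn_get l

/-- Route a fiberwise (first-coordinate) permutation in `rtSworst G₁` rounds. -/
lemma fiber_route_L [Finite A] (G₂ : SimpleGraph B) (h₁ : G₁.Connected)
    (e : B → Equiv.Perm A) :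
    ∃ M : List (Equiv.Perm (A × B)), M.length = rtSworst G₁ ∧
      (∀ σ ∈ M, IsSwapRound (G₁ □ G₂) σ) ∧ M.prod = fiberL e := by
  classical
  set r := rtSworst G₁ with hr
  have hchoice : ∀ b, ∃ L : List (Equiv.Perm A), L.length = r ∧
      (∀ σ ∈ L, IsSwapRound G₁ σ) ∧ L.prod = e b := by
    intro b
    obtain ⟨L, hlen, hsw, hpr⟩ := exists_list_rtS h₁ (e b)
    have hle : L.length ≤ r := hlen ▸ rtS_le_rtSworst G₁ (e b)
    refine ⟨L ++ List.replicate (r - L.length) 1, ?_, ?_, ?_⟩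
    · simp [Nat.add_sub_cancel' hle]
    · intro σ hσ
      rcases List.mem_append.1 hσ with h | h
      · exact hsw _ h
      · rw [List.eq_of_mem_replicate h]; exact isSwapRound_one _
    · rw [List.prod_append, List.prod_replicate, one_pow, mul_one, hpr]
  choose P hPlen hPsw hPprod using hchoice
  set g : Fin r → B → Equiv.Perm A :=
    fun i b => (P b).get (Fin.cast (hPlen b).symm i) with hg
  refine ⟨List.ofFn (fun i => fiberL (g i)), by simp, ?_, ?_⟩
  · intro σ hσ
    obtain ⟨i, rfl⟩ := List.mem_ofFn.1 hσ
    exact isSwapRound_fiberL _ fun b => hPsw b _ (List.get_mem _ _)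
  · have h1 : List.ofFn (fun i => fiberL (g i)) = (List.ofFn g).map fiberL := by
      rw [List.map_ofFn]; rfl
    rw [h1, ← MonoidHom.map_list_prod]
    congr 1
    funext b
    have h2 : ((List.ofFn g).prod) b
        = ((List.ofFn g).map (Pi.evalMonoidHom (fun _ : B => Equiv.Perm A) b)).prod :=
      (MonoidHom.map_list_prod (Pi.evalMonoidHom (fun _ : B => Equiv.Perm A) b) _)
    rw [h2, List.map_ofFn]
    have h3 : List.ofFn ((Pi.evalMonoidHom (fun _ : B => Equiv.Perm A) b) ∘ g)
        = P b := by
      exact ofFn_get_cast (P b) (hPlen b)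
    rw [h3, hPprod]

/-- Route a fiberwise (second-coordinate) permutation in `rtSworst G₂` rounds. -/
lemma fiber_route_R [Finite B] (G₁ : SimpleGraph A) (h₂ : G₂.Connected)
    (e : A → Equiv.Perm B) :
    ∃ M : List (Equiv.Perm (A × B)), M.length = rtSworst G₂ ∧
      (∀ σ ∈ M, IsSwapRound (G₁ □ G₂) σ) ∧ M.prod = fiberR e := by
  classical
  set r := rtSworst G₂ with hr
  have hchoice : ∀ a, ∃ L : List (Equiv.Perm B), L.length = r ∧
      (∀ σ ∈ L, IsSwapRound G₂ σ) ∧ L.prod = e a := by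
    intro a
    obtain ⟨L, hlen, hsw, hpr⟩ := exists_list_rtS h₂ (e a)
    have hle : L.length ≤ r := hlen ▸ rtS_le_rtSworst G₂ (e a)
    refine ⟨L ++ List.replicate (r - L.length) 1, ?_, ?_, ?_⟩
    · simp [Nat.add_sub_cancel' hle]
    · intro σ hσ
      rcases List.mem_append.1 hσ with h | h
      · exact hsw _ h
      · rw [List.eq_of_mem_replicate h]; exact isSwapRound_one _
    · rw [List.prod_append, List.prod_replicate, one_pow, mul_one, hpr]
  choose P hPlen hPsw hPprod using hchoice
  set g : Fin r → A → Equiv.Perm B :=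
    fun i a => (P a).get (Fin.cast (hPlen a).symm i) with hg
  refine ⟨List.ofFn (fun i => fiberR (g i)), by simp, ?_, ?_⟩
  · intro σ hσ
    obtain ⟨i, rfl⟩ := List.mem_ofFn.1 hσ
    exact isSwapRound_fiberR _ fun a => hPsw a _ (List.get_mem _ _)
  · have h1 : List.ofFn (fun i => fiberR (g i)) = (List.ofFn g).map fiberR := by
      rw [List.map_ofFn]; rfl
    rw [h1, ← MonoidHom.map_list_prod]
    congr 1
    funext a
    have h2 : ((List.ofFn g).prod) a
        = ((List.ofFn g).map (Pi.evalMonoidHom (fun _ : A => Equiv.Perm B) a)).prod :=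
      (MonoidHom.map_list_prod (Pi.evalMonoidHom (fun _ : A => Equiv.Perm B) a) _)
    rw [h2, List.map_ofFn]
    have h3 : List.ofFn ((Pi.evalMonoidHom (fun _ : A => Equiv.Perm B) a) ∘ g)
        = P a := by
      exact ofFn_get_cast (P a) (hPlen a)
    rw [h3, hPprod]

end Fiber

section Core

open Finset

/-- Decompose a `k`-regular bipartite multigraph into `k` perfect matchings. -/
lemma core_matchings {A B : Type*} [DecidableEq A] [DecidableEq B] [Fintype B] :
    ∀ (k : ℕ) (S : B → Finset A) (t : A × B → B),
      (∀ b, (S b).card = k) →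
      (∀ b', (∑ b, ((S b).filter (fun a => t (a, b) = b')).card) = k) →
      ∃ m : Fin k → B → A,
        (∀ i b, m i b ∈ S b) ∧ (∀ b, Function.Injective fun i => m i b) ∧
        (∀ i, Function.Injective fun b => t (m i b, b)) := by
  intro k
  induction k with
  | zero =>
    intro S t _ _
    exact ⟨fun i => i.elim0, fun i => i.elim0, fun b i => i.elim0, fun i => i.elim0⟩
  | succ k ih =>
    intro S t hS ht
    set T : B → Finset B := fun b => (S b).image (fun a => t (a, b)) with hT
    have hall : ∀ s : Finset B, s.card ≤ (s.biUnion T).card := by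
      intro s
      set W := s.biUnion T with hW
      have key : ∀ b ∈ s, (S b).card
          = ∑ b' ∈ W, ((S b).filter (fun a => t (a, b) = b')).card := fun b hb =>
        Finset.card_eq_sum_card_fiberwise fun a ha =>
          Finset.mem_biUnion.2 ⟨b, hb, Finset.mem_image.2 ⟨a, ha, rfl⟩⟩
      have h2 : ∑ b ∈ s, (S b).card
          = ∑ b' ∈ W, ∑ b ∈ s, ((S b).filter (fun a => t (a, b) = b')).card := by
        rw [Finset.sum_congr rfl key, Finset.sum_comm]
      have h3 : ∑ b' ∈ W, ∑ b ∈ s, ((S b).filter (fun a => t (a, b) = b')).card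
          ≤ ∑ _b' ∈ W, (k + 1) := by
        refine Finset.sum_le_sum fun b' _ => ?_
        calc ∑ b ∈ s, ((S b).filter (fun a => t (a, b) = b')).card
            ≤ ∑ b, ((S b).filter (fun a => t (a, b) = b')).card :=
              Finset.sum_le_sum_of_subset (Finset.subset_univ s)
          _ = k + 1 := ht b'
      have h1 : ∑ b ∈ s, (S b).card = s.card * (k + 1) := by
        rw [Finset.sum_congr rfl fun b _ => hS b, Finset.sum_const, smul_eq_mul]
      have h4 : s.card * (k + 1) ≤ W.card * (k + 1) := by
        rw [← h1, h2]
        simpa using h3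
      exact Nat.le_of_mul_le_mul_right h4 (Nat.succ_pos k)
    obtain ⟨f, hfinj, hf⟩ := (Finset.all_card_le_biUnion_card_iff_exists_injective T).1 hall
    have hfbij : Function.Bijective f := Finite.injective_iff_bijective.1 hfinj
    have hchoice : ∀ b, ∃ a, a ∈ S b ∧ t (a, b) = f b := by
      intro b
      obtain ⟨a, ha, hta⟩ := Finset.mem_image.1 (hf b)
      exact ⟨a, ha, hta⟩
    choose a₀ ha₀S ha₀t using hchoice
    set S' : B → Finset A := fun b => (S b).erase (a₀ b) with hS'def
    have hS' : ∀ b, (S' b).card = k := fun b => by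
      rw [hS'def]
      simp only []
      rw [Finset.card_erase_of_mem (ha₀S b), hS b]
      rfl
    have ht' : ∀ b', ∑ b, ((S' b).filter (fun a => t (a, b) = b')).card = k := by
      intro b'
      obtain ⟨b₀, rfl⟩ := hfbij.surjective b'
      set g : B → ℕ := fun b => ((S b).filter (fun a => t (a, b) = f b₀)).card with hgdef
      set g' : B → ℕ := fun b => ((S' b).filter (fun a => t (a, b) = f b₀)).card with hg'def
      have hgb₀ : a₀ b₀ ∈ (S b₀).filter (fun a => t (a, b₀) = f b₀) :=
        Finset.mem_filter.2 ⟨ha₀S b₀, ha₀t b₀⟩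
      have hgb₀pos : 1 ≤ g b₀ := Finset.card_pos.2 ⟨a₀ b₀, hgb₀⟩
      have hgb₀' : g' b₀ = g b₀ - 1 := by
        show ((S' b₀).filter _).card = _
        rw [hS'def]
        simp only []
        rw [Finset.filter_erase, Finset.card_erase_of_mem hgb₀]
      have hg'eq : ∀ b ∈ Finset.univ.erase b₀, g' b = g b := by
        intro b hb
        have hbne : b ≠ b₀ := (Finset.mem_erase.1 hb).1
        show ((S' b).filter _).card = ((S b).filter _).card
        rw [hS'def]
        simp only []
        rw [Finset.filter_erase, Finset.erase_eq_of_notMem]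
        intro hmem
        have := (Finset.mem_filter.1 hmem).2
        rw [ha₀t b] at this
        exact hbne (hfinj this)
      have hsum : g b₀ + ∑ b ∈ Finset.univ.erase b₀, g b = k + 1 := by
        rw [Finset.add_sum_erase _ g (Finset.mem_univ b₀)]
        exact ht (f b₀)
      calc ∑ b, g' b = g' b₀ + ∑ b ∈ Finset.univ.erase b₀, g' b :=
            (Finset.add_sum_erase _ g' (Finset.mem_univ b₀)).symm
        _ = (g b₀ - 1) + ∑ b ∈ Finset.univ.erase b₀, g b := by
            rw [hgb₀', Finset.sum_congr rfl hg'eq]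
        _ = k := by omega
    obtain ⟨m', hm'S, hm'injI, hm'injB⟩ := ih S' t hS' ht'
    refine ⟨Fin.cases a₀ m', ?_, ?_, ?_⟩
    · intro i b
      rcases Fin.eq_zero_or_eq_succ i with rfl | ⟨j, rfl⟩
      · simpa using ha₀S b
      · simpa using Finset.mem_of_mem_erase (hm'S j b)
    · intro b i j hij
      rcases Fin.eq_zero_or_eq_succ i with rfl | ⟨i', rfl⟩ <;>
        rcases Fin.eq_zero_or_eq_succ j with rfl | ⟨j', rfl⟩
      · rfl
      · simp only [Fin.cases_zero, Fin.cases_succ] at hij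
        exact absurd hij.symm (Finset.ne_of_mem_erase (hm'S j' b))
      · simp only [Fin.cases_zero, Fin.cases_succ] at hij
        exact absurd hij (Finset.ne_of_mem_erase (hm'S i' b))
      · simp only [Fin.cases_succ] at hij
        exact congrArg Fin.succ (hm'injI b hij)
    · intro i
      rcases Fin.eq_zero_or_eq_succ i with rfl | ⟨i', rfl⟩
      · simp only [Fin.cases_zero]
        have : (fun b => t (a₀ b, b)) = f := funext ha₀t
        rw [this]
        exact hfinj
      · simp only [Fin.cases_succ]
        exact hm'injB i'

end Core

section Decomp

open Finset

/-- Counting: each `b'`-fiber of `fun x => (π x).2` has exactly `card A` elements,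
distributed over the columns `b`. -/
lemma decomp_count {A B : Type*} [Fintype A] [Fintype B] [DecidableEq A] [DecidableEq B]
    (π : Equiv.Perm (A × B)) (b' : B) :
    ∑ b, ((Finset.univ : Finset A).filter (fun a => (π (a, b)).2 = b')).card
      = Fintype.card A := by
  have e1 : ((Finset.univ : Finset (A × B)).filter (fun x => (π x).2 = b')).card
      = ∑ b, (((Finset.univ : Finset (A × B)).filter (fun x => (π x).2 = b')).filter
          (fun x => x.2 = b)).card :=
    Finset.card_eq_sum_card_fiberwise fun x _ => Finset.mem_univ x.2
  have e2 : ∀ b : B, (((Finset.univ : Finset (A × B)).filter (fun x => (π x).2 = b')).filter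
      (fun x => x.2 = b)).card
      = ((Finset.univ : Finset A).filter (fun a => (π (a, b)).2 = b')).card := by
    intro b
    refine Finset.card_bij (fun x _ => x.1) ?_ ?_ ?_
    · intro x hx
      obtain ⟨hx1, hx2⟩ := Finset.mem_filter.1 hx
      obtain ⟨_, hx1⟩ := Finset.mem_filter.1 hx1
      refine Finset.mem_filter.2 ⟨Finset.mem_univ _, ?_⟩
      have : x = (x.1, b) := by rw [← hx2]
      rw [← this]; exact hx1
    · intro x₁ hx₁ x₂ hx₂ h
      obtain ⟨_, h₁⟩ := Finset.mem_filter.1 hx₁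
      obtain ⟨_, h₂⟩ := Finset.mem_filter.1 hx₂
      exact Prod.ext h (h₁.trans h₂.symm)
    · intro a ha
      obtain ⟨_, ha⟩ := Finset.mem_filter.1 ha
      exact ⟨(a, b), Finset.mem_filter.2 ⟨Finset.mem_filter.2 ⟨Finset.mem_univ _, ha⟩, rfl⟩, rfl⟩
  have e3 : ((Finset.univ : Finset (A × B)).filter (fun x => (π x).2 = b')).card
      = Fintype.card A := by
    rw [← Finset.card_univ]
    refine Finset.card_bij (fun x _ => (π x).1) ?_ ?_ ?_
    · intro x _; exact Finset.mem_univ _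
    · intro x₁ hx₁ x₂ hx₂ h
      obtain ⟨_, h₁⟩ := Finset.mem_filter.1 hx₁
      obtain ⟨_, h₂⟩ := Finset.mem_filter.1 hx₂
      exact π.injective (Prod.ext h (h₁.trans h₂.symm))
    · intro a _
      refine ⟨π.symm (a, b'), Finset.mem_filter.2 ⟨Finset.mem_univ _, ?_⟩, ?_⟩
      · rw [Equiv.apply_symm_apply]
      · show (π (π.symm (a, b'))).1 = a
        rw [Equiv.apply_symm_apply]
  rw [← e3, e1]
  exact Finset.sum_congr rfl fun b _ => (e2 b).symm

/-- Slepian–Duguid style decomposition: every permutation of a product factors into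
a first-coordinate phase, a second-coordinate phase, and a first-coordinate phase. -/
lemma decomp {A B : Type*} [Fintype A] [Fintype B] (π : Equiv.Perm (A × B)) :
    ∃ (ρ₁ ρ₃ : B → Equiv.Perm A) (ρ₂ : A → Equiv.Perm B),
      fiberL ρ₃ * fiberR ρ₂ * fiberL ρ₁ = π := by
  classical
  set n := Fintype.card A with hn
  set t : A × B → B := fun x => (π x).2 with htdef
  obtain ⟨m, hmS, hmi, hmb⟩ := core_matchings n (fun _ => (Finset.univ : Finset A)) t
    (fun _ => Finset.card_univ) (fun b' => decomp_count π b')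
  have hmbij : ∀ b, Function.Bijective (fun i => m i b) := by
    intro b
    rw [Fintype.bijective_iff_injective_and_card]
    exact ⟨hmi b, by simp [hn]⟩
  set ε : Fin n ≃ A := (Fintype.equivFin A).symm with hε
  set σ : B → (Fin n ≃ A) := fun b => Equiv.ofBijective _ (hmbij b) with hσ
  set ρ₁ : B → Equiv.Perm A := fun b => (σ b).symm.trans ε with hρ₁
  set ρ₂ : A → Equiv.Perm B := fun a' =>
    Equiv.ofBijective (fun b => t (m (ε.symm a') b, b))
      (Finite.injective_iff_bijective.1 (hmb (ε.symm a'))) with hρ₂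
  set φ := fiberR ρ₂ * fiberL ρ₁ with hφ
  have hφ2 : ∀ x : A × B, (φ x).2 = (π x).2 := by
    rintro ⟨a, b⟩
    show ρ₂ (ρ₁ b a) b = (π (a, b)).2
    have h0 : ρ₂ (ρ₁ b a) b = t (m (ε.symm (ρ₁ b a)) b, b) := rfl
    have h1 : ε.symm (ρ₁ b a) = (σ b).symm a := by
      show ε.symm (ε ((σ b).symm a)) = (σ b).symm a
      rw [Equiv.symm_apply_apply]
    have h2 : m ((σ b).symm a) b = a := (σ b).apply_symm_apply a
    rw [h0, h1, h2]
  set ν := π * φ⁻¹ with hν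
  have hν2 : ∀ x : A × B, (ν x).2 = x.2 := by
    intro x
    show (π (φ⁻¹ x)).2 = x.2
    rw [← hφ2 (φ⁻¹ x)]
    exact congrArg Prod.snd (φ.apply_symm_apply x)
  have hν1inj : ∀ b, Function.Injective (fun a => (ν (a, b)).1) := by
    intro b a₁ a₂ h
    have h2 : (ν (a₁, b)).2 = (ν (a₂, b)).2 := by rw [hν2, hν2]
    have := ν.injective (Prod.ext h h2)
    exact (Prod.ext_iff.1 this).1
  set ρ₃ : B → Equiv.Perm A := fun b =>
    Equiv.ofBijective _ (Finite.injective_iff_bijective.1 (hν1inj b)) with hρ₃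
  have hL3 : fiberL ρ₃ = ν := by
    apply Equiv.ext
    rintro ⟨a, b⟩
    show ((ν (a, b)).1, b) = ν (a, b)
    exact Prod.ext rfl (hν2 (a, b)).symm
  refine ⟨ρ₁, ρ₃, ρ₂, ?_⟩
  rw [mul_assoc, ← hφ, hL3, hν, inv_mul_cancel_right]

end Decomp

/-- The worst-case swap routing time of a Cartesian (box) product satisfies
`rt_S(G₁ □ G₂) ≤ 2·rt_S(G₁) + rt_S(G₂)`. -/
theorem rtSworst_boxProd_le {V₁ V₂ : Type*} [Fintype V₁] [Fintype V₂]
    (G₁ : SimpleGraph V₁) (G₂ : SimpleGraph V₂)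
    (h₁ : G₁.Connected) (h₂ : G₂.Connected) :
    rtSworst (G₁ □ G₂) ≤ 2 * rtSworst G₁ + rtSworst G₂ := by
  classical
  refine ciSup_le fun π => ?_
  obtain ⟨ρ₁, ρ₃, ρ₂, hdec⟩ := decomp π
  obtain ⟨M₃, hlen₃, hsw₃, hpr₃⟩ := fiber_route_L G₂ h₁ ρ₃
  obtain ⟨M₂, hlen₂, hsw₂, hpr₂⟩ := fiber_route_R G₁ h₂ ρ₂
  obtain ⟨M₁, hlen₁, hsw₁, hpr₁⟩ := fiber_route_L G₂ h₁ ρ₁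
  have hle : rtS (G₁ □ G₂) π ≤ (M₃ ++ M₂ ++ M₁).length := by
    refine rtS_le_of_list ?_ ?_
    · intro σ hσ
      rcases List.mem_append.1 hσ with h | h
      · rcases List.mem_append.1 h with h' | h'
        · exact hsw₃ σ h'
        · exact hsw₂ σ h'
      · exact hsw₁ σ h
    · rw [List.prod_append, List.prod_append, hpr₃, hpr₂, hpr₁]
      exact hdec
  calc rtS (G₁ □ G₂) π ≤ (M₃ ++ M₂ ++ M₁).length := hle
    _ = rtSworst G₁ + rtSworst G₂ + rtSworst G₁ := by
        simp only [List.length_append, hlen₁, hlen₂, hlen₃]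
    _ ≤ 2 * rtSworst G₁ + rtSworst G₂ := by omega
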